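/- arXiv:1802.01619 — 2 statements merged into one kernel-verified Lean document; each statement's English description precedes it below -/
import Mathlib

section
/- Let (a_n)_{n≥1} be a sequence of real numbers such that for all m, n ≥ 1, a_{m+n} ≥ a_m + a_n - ψ(m+n), where ψ(x) = 7·√(x·log(1+x)). If additionally a_n/n is bounded above, then the limit lim_{n→∞} a_n/n exists. -/
open Filter Real Finset

noncomputable def psi6 (x : ℝ) : ℝ := 7 * Real.sqrt (x * Real.log (1 + x))

lemma psi6_nonneg (x : ℝ) : 0 ≤ psi6 x :=
  mul_nonneg (by norm_num) (Real.sqrt_nonneg _)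

lemma log_ineq6 {x y : ℝ} (hx : 1 ≤ x) (hxy : x ≤ y) :
    x * Real.log (1 + y) ≤ y * Real.log (1 + x) := by
  have hx0 : (0:ℝ) < x := by linarith
  have hp : 1 ≤ y / x := (one_le_div hx0).2 hxy
  have hb := one_add_mul_self_le_rpow_one_add (by linarith : (-1:ℝ) ≤ x) hp
  have h1 : 1 + y ≤ (1 + x) ^ (y / x) := by
    have : y / x * x = y := div_mul_cancel₀ _ (ne_of_gt hx0)
    linarith [hb, this.ge, this.le]
  have h2 : Real.log (1 + y) ≤ (y / x) * Real.log (1 + x) := by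
    calc Real.log (1 + y) ≤ Real.log ((1 + x) ^ (y / x)) :=
          Real.log_le_log (by linarith) h1
      _ = (y / x) * Real.log (1 + x) := Real.log_rpow (by linarith) _
  calc x * Real.log (1 + y) ≤ x * ((y / x) * Real.log (1 + x)) := by
        exact mul_le_mul_of_nonneg_left h2 hx0.le
    _ = y * Real.log (1 + x) := by field_simp

lemma psi6_div_anti {x y : ℝ} (hx : 1 ≤ x) (hxy : x ≤ y) :
    psi6 y / y ≤ psi6 x / x := by
  have hx0 : (0:ℝ) < x := by linarith
  have hy0 : (0:ℝ) < y := by linarith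
  rw [div_le_div_iff₀ hy0 hx0]
  unfold psi6
  have hLx : 0 ≤ Real.log (1 + x) := Real.log_nonneg (by linarith)
  have hLy : 0 ≤ Real.log (1 + y) := Real.log_nonneg (by linarith)
  have key : y * Real.log (1 + y) * x ^ 2 ≤ x * Real.log (1 + x) * y ^ 2 := by
    have h := log_ineq6 hx hxy
    nlinarith [mul_le_mul_of_nonneg_right h (mul_pos hx0 hy0).le]
  calc 7 * Real.sqrt (y * Real.log (1 + y)) * x
      = 7 * Real.sqrt (y * Real.log (1 + y) * x ^ 2) := by
        rw [Real.sqrt_mul (show (0:ℝ) ≤ y * Real.log (1 + y) by positivity) (x ^ 2),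
          Real.sqrt_sq hx0.le]; ring
    _ ≤ 7 * Real.sqrt (x * Real.log (1 + x) * y ^ 2) := by
        gcongr
    _ = 7 * Real.sqrt (x * Real.log (1 + x)) * y := by
        rw [Real.sqrt_mul (show (0:ℝ) ≤ x * Real.log (1 + x) by positivity) (y ^ 2),
          Real.sqrt_sq hy0.le]; ring

noncomputable def Phi6 (m k : ℕ) : ℝ :=
  ∑ j ∈ Finset.range (Nat.clog 2 k), psi6 ((2:ℝ) ^ j * m) / 2 ^ j

lemma Phi6_nonneg (m k : ℕ) : 0 ≤ Phi6 m k :=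
  Finset.sum_nonneg fun j _ => div_nonneg (psi6_nonneg _) (by positivity)

lemma Phi6_mono (m : ℕ) {k k' : ℕ} (h : k ≤ k') : Phi6 m k ≤ Phi6 m k' := by
  apply Finset.sum_le_sum_of_subset_of_nonneg
  · exact Finset.range_subset_range.2 (Nat.clog_mono_right 2 h)
  · exact fun j _ _ => div_nonneg (psi6_nonneg _) (by positivity)

lemma lemA (a : ℕ → ℝ)
    (hsub : ∀ m n : ℕ, 1 ≤ m → 1 ≤ n →
      a m + a n - 7 * Real.sqrt (((m:ℝ) + n) * Real.log (1 + ((m:ℝ) + n))) ≤ a (m + n))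
    (m : ℕ) (hm : 1 ≤ m) :
    ∀ k : ℕ, 1 ≤ k → (k:ℝ) * a m - (k:ℝ) * Phi6 m k ≤ a (k * m) := by
  intro k
  induction k using Nat.strong_induction_on with
  | _ k ih =>
  intro hk
  rcases eq_or_lt_of_le hk with h1 | hk2
  · have : Nat.clog 2 k = 0 := by rw [← h1]; exact Nat.clog_one_right 2
    simp [← h1, Phi6, this]
  -- now 2 ≤ k
  have hk2 : 2 ≤ k := hk2
  set p := k / 2 with hp
  set q := k - p with hq
  have hp1 : 1 ≤ p := by omega
  have hq1 : 1 ≤ q := by omega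
  have hpk : p < k := by omega
  have hqk : q < k := by omega
  have hpq : p ≤ q := by omega
  have hsum : p + q = k := by omega
  have hA := ih p hpk hp1
  have hB := ih q hqk hq1
  have hS := hsub (p * m) (q * m) (Nat.one_le_iff_ne_zero.2 (by positivity))
    (Nat.one_le_iff_ne_zero.2 (by positivity))
  have hcast : ((p * m : ℕ) : ℝ) + ((q * m : ℕ) : ℝ) = (k : ℝ) * m := by
    push_cast; rw [← hsum]; push_cast; ring
  rw [hcast] at hS
  have hkm : p * m + q * m = k * m := by rw [← hsum]; ring
  rw [hkm] at hS
  -- key: k * Phi6 m q + psi6 (k*m) ≤ k * Phi6 m k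
  have hclog : Nat.clog 2 k = Nat.clog 2 q + 1 := by
    rw [Nat.clog_of_two_le (by norm_num) hk2]
    congr 1
    have : (k + 2 - 1) / 2 = q := by omega
    rw [this]
  set J := Nat.clog 2 q with hJ
  have hPhik : Phi6 m k = Phi6 m q + psi6 ((2:ℝ) ^ J * m) / 2 ^ J := by
    rw [Phi6, hclog, Finset.sum_range_succ]; rfl
  have h2J : (2:ℕ) ^ J ≤ k := by
    have := Nat.pow_pred_clog_lt_self (b := 2) (by norm_num) (by omega : 1 < k)
    rw [hclog] at this
    simpa using this.le
  have hx1 : (1:ℝ) ≤ (2:ℝ) ^ J * m := by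
    have : (1:ℝ) ≤ (m:ℝ) := by exact_mod_cast hm
    nlinarith [one_le_pow₀ (by norm_num : (1:ℝ) ≤ 2) (n := J)]
  have hxy : (2:ℝ) ^ J * m ≤ (k:ℝ) * m := by
    have h2 : ((2:ℕ) ^ J : ℝ) ≤ (k:ℝ) := by exact_mod_cast h2J
    push_cast at h2 ⊢
    nlinarith [show (0:ℝ) ≤ (m:ℝ) from Nat.cast_nonneg m]
  have hanti := psi6_div_anti hx1 hxy
  have hkey : psi6 ((k:ℝ) * m) ≤ (k:ℝ) * (psi6 ((2:ℝ) ^ J * m) / 2 ^ J) := by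
    have hx0 : (0:ℝ) < (2:ℝ) ^ J * m := by linarith
    have hy0 : (0:ℝ) < (k:ℝ) * m := by linarith
    rw [div_le_div_iff₀ hy0 hx0] at hanti
    have hm0 : (0:ℝ) < (m:ℝ) := by exact_mod_cast hm
    have h2Jpos : (0:ℝ) < (2:ℝ) ^ J := by positivity
    rw [← sub_nonneg]
    have expand : (k:ℝ) * (psi6 ((2:ℝ) ^ J * m) / 2 ^ J) - psi6 ((k:ℝ) * m)
        = (psi6 ((2:ℝ) ^ J * m) * ((k:ℝ) * m) - psi6 ((k:ℝ) * m) * ((2:ℝ) ^ J * m))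
          / ((2:ℝ) ^ J * m) := by
      field_simp
    rw [expand]
    apply div_nonneg _ hx0.le
    linarith
  -- Phi6 m p ≤ Phi6 m q
  have hPpq : Phi6 m p ≤ Phi6 m q := Phi6_mono m hpq
  have hpsi : a (p * m) + a (q * m) - psi6 ((k:ℝ) * m) ≤ a (k * m) := by
    unfold psi6; exact hS
  have hkR : ((p:ℝ) + q) = (k:ℝ) := by exact_mod_cast congrArg (Nat.cast : ℕ → ℝ) hsum
  have hp0 : (0:ℝ) ≤ (p:ℝ) := Nat.cast_nonneg p
  have hq0 : (0:ℝ) ≤ (q:ℝ) := Nat.cast_nonneg q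
  calc (k:ℝ) * a m - (k:ℝ) * Phi6 m k
      = (p:ℝ) * a m + (q:ℝ) * a m - (k:ℝ) * (Phi6 m q + psi6 ((2:ℝ) ^ J * m) / 2 ^ J) := by
        rw [← hPhik]; rw [← hkR]; ring
    _ ≤ ((p:ℝ) * a m - (p:ℝ) * Phi6 m p) + ((q:ℝ) * a m - (q:ℝ) * Phi6 m q)
          - psi6 ((k:ℝ) * m) := by
        have h1 : (p:ℝ) * Phi6 m p ≤ (p:ℝ) * Phi6 m q := mul_le_mul_of_nonneg_left hPpq hp0
        have h2 : ((p:ℝ) + (q:ℝ)) * Phi6 m q = (k:ℝ) * Phi6 m q := by rw [hkR]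
        nlinarith [hkey, h1]
    _ ≤ a (p * m) + a (q * m) - psi6 ((k:ℝ) * m) := by
        linarith [hA, hB]
    _ ≤ a (k * m) := hpsi

lemma sqrt_pow6 {x : ℝ} (hx : 0 ≤ x) (j : ℕ) :
    Real.sqrt (x ^ j) = (Real.sqrt x) ^ j := by
  rw [show x ^ j = ((Real.sqrt x) ^ j) ^ 2 by
      rw [← pow_mul, mul_comm, pow_mul, Real.sq_sqrt hx],
    Real.sqrt_sq (by positivity)]

lemma Phi6_le (m : ℕ) (hm : 1 ≤ m) (k : ℕ) :
    Phi6 m k ≤ 200 * Real.sqrt ((m:ℝ) * Real.log (1 + m)) := by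
  have hm1 : (1:ℝ) ≤ (m:ℝ) := by exact_mod_cast hm
  set L := Real.log (1 + (m:ℝ)) with hL
  have hL0 : 0 ≤ L := Real.log_nonneg (by linarith)
  have hL2 : Real.log 2 ≤ L := Real.log_le_log (by norm_num) (by linarith)
  set r := Real.sqrt (3 / 4) with hr
  have hr0 : 0 ≤ r := Real.sqrt_nonneg _
  have hr78 : r ≤ 7 / 8 := by
    rw [hr, show (3/4 : ℝ) = (7/8)^2 * (48/49) by norm_num]
    calc Real.sqrt ((7/8)^2 * (48/49)) ≤ Real.sqrt ((7/8)^2 * 1) := by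
          apply Real.sqrt_le_sqrt; nlinarith
      _ = 7/8 := by rw [mul_one, Real.sqrt_sq (by norm_num)]
  -- termwise bound
  have hterm : ∀ j : ℕ, psi6 ((2:ℝ) ^ j * m) / 2 ^ j
      ≤ 14 * Real.sqrt ((m:ℝ) * L) * r ^ j := by
    intro j
    have h2j : (1:ℝ) ≤ (2:ℝ) ^ j := one_le_pow₀ (by norm_num)
    have hlogj : Real.log (1 + (2:ℝ) ^ j * m) ≤ (1 + j) * L := by
      have h1 : (1:ℝ) + (2:ℝ) ^ j * m ≤ (2:ℝ) ^ j * (1 + m) := by nlinarith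
      calc Real.log (1 + (2:ℝ) ^ j * m) ≤ Real.log ((2:ℝ) ^ j * (1 + m)) :=
            Real.log_le_log (by positivity) h1
        _ = j * Real.log 2 + L := by
            rw [Real.log_mul (by positivity) (by linarith), Real.log_pow]
        _ ≤ (1 + j) * L := by nlinarith [hL2, Real.log_nonneg (by norm_num : (1:ℝ) ≤ 2)]
    have hbern : (1 + (j:ℝ)) ≤ 4 * (3/2) ^ j := by
      have := one_add_mul_le_pow (by norm_num : (-2:ℝ) ≤ 1/2) j
      nlinarith [this]
    have harg : (2:ℝ) ^ j * m * Real.log (1 + (2:ℝ) ^ j * m) / ((2:ℝ)^j)^2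
        ≤ (m * L * (3/4) ^ j) * 4 := by
      have h2jpos : (0:ℝ) < (2:ℝ) ^ j := by positivity
      rw [div_le_iff₀ (by positivity)]
      have e1 : (2:ℝ) ^ j * m * ((1 + j) * L) ≤ (2:ℝ) ^ j * m * (4 * (3/2)^j * L) := by
        apply mul_le_mul_of_nonneg_left _ (by positivity)
        apply mul_le_mul_of_nonneg_right hbern hL0
      have e2 : (2:ℝ) ^ j * m * Real.log (1 + (2:ℝ) ^ j * m)
          ≤ (2:ℝ) ^ j * m * ((1 + j) * L) := by
        apply mul_le_mul_of_nonneg_left hlogj (by positivity)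
      have k1 : ((3:ℝ)/2) ^ j * (2:ℝ) ^ j = 3 ^ j := by rw [← mul_pow]; norm_num
      have k2 : ((3:ℝ)/4) ^ j * ((2:ℝ) ^ j) ^ 2 = 3 ^ j := by
        rw [← pow_mul, mul_comm j 2, pow_mul, ← mul_pow]; norm_num
      have e3 : (2:ℝ) ^ j * m * (4 * (3/2)^j * L) = m * L * (3/4)^j * 4 * ((2:ℝ)^j)^2 := by
        linear_combination (4 * (m:ℝ) * L) * k1 - (4 * (m:ℝ) * L) * k2
      linarith
    calc psi6 ((2:ℝ) ^ j * m) / 2 ^ j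
        = 7 * Real.sqrt ((2:ℝ) ^ j * m * Real.log (1 + (2:ℝ) ^ j * m) / ((2:ℝ)^j)^2) := by
          rw [psi6, Real.sqrt_div' _ (by positivity : (0:ℝ) ≤ ((2:ℝ)^j)^2),
            Real.sqrt_sq (by positivity : (0:ℝ) ≤ (2:ℝ)^j)]
          ring
      _ ≤ 7 * Real.sqrt ((m * L * (3/4) ^ j) * 4) := by
          gcongr
      _ = 14 * Real.sqrt ((m:ℝ) * L) * r ^ j := by
          rw [Real.sqrt_mul (by positivity : (0:ℝ) ≤ (m:ℝ) * L * (3/4:ℝ)^j) 4,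
            Real.sqrt_mul (by positivity : (0:ℝ) ≤ (m:ℝ) * L) ((3/4:ℝ)^j),
            sqrt_pow6 (by norm_num : (0:ℝ) ≤ (3:ℝ)/4),
            show (4:ℝ) = 2^2 by norm_num, Real.sqrt_sq (by norm_num : (0:ℝ) ≤ 2)]
          rw [hr]; ring
  have hsum8 : ∀ n : ℕ, (∑ j ∈ Finset.range n, r ^ j) ≤ 8 := by
    intro n
    have h1 : (∑ j ∈ Finset.range n, r ^ j) ≤ ∑ j ∈ Finset.range n, (7/8:ℝ) ^ j := by
      apply Finset.sum_le_sum
      intro j _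
      exact pow_le_pow_left₀ hr0 hr78 j
    have h2 : (∑ j ∈ Finset.range n, (7/8:ℝ) ^ j) = ((7/8:ℝ)^n - 1)/((7/8:ℝ) - 1) :=
      geom_sum_eq (by norm_num) n
    have h3 : (0:ℝ) ≤ (7/8:ℝ)^n := by positivity
    rw [h2, show ((7/8:ℝ)^n - 1)/((7/8:ℝ) - 1) = 8 - 8*(7/8)^n by ring] at h1
    linarith
  have hs0 : 0 ≤ Real.sqrt ((m:ℝ) * L) := Real.sqrt_nonneg _
  calc Phi6 m k ≤ ∑ j ∈ Finset.range (Nat.clog 2 k), 14 * Real.sqrt ((m:ℝ) * L) * r ^ j :=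
        Finset.sum_le_sum fun j _ => hterm j
    _ = 14 * Real.sqrt ((m:ℝ) * L) * ∑ j ∈ Finset.range (Nat.clog 2 k), r ^ j := by
        rw [Finset.mul_sum]
    _ ≤ 14 * Real.sqrt ((m:ℝ) * L) * 8 := by
        apply mul_le_mul_of_nonneg_left (hsum8 _) (by positivity)
    _ ≤ 200 * Real.sqrt ((m:ℝ) * L) := by nlinarith

lemma tend6 : Tendsto (fun n : ℕ => Real.sqrt ((n:ℝ) * Real.log (1 + n)) / n)
    atTop (nhds 0) := by
  have hg : Tendsto (fun n : ℕ => 2 * Real.sqrt (Real.sqrt (1 / (n:ℝ)))) atTop (nhds 0) := by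
    have h0 : Tendsto (fun n : ℕ => 1 / (n:ℝ)) atTop (nhds 0) :=
      tendsto_one_div_atTop_nhds_zero_nat
    have hs : Tendsto Real.sqrt (nhds 0) (nhds 0) :=
      Real.continuous_sqrt.tendsto' 0 0 Real.sqrt_zero
    have h1 : Tendsto (fun n : ℕ => Real.sqrt (Real.sqrt (1 / (n:ℝ)))) atTop (nhds 0) :=
      hs.comp (hs.comp h0)
    simpa using h1.const_mul 2
  apply tendsto_of_tendsto_of_tendsto_of_le_of_le' tendsto_const_nhds hg
  · filter_upwards [eventually_ge_atTop 1] with n hn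
    positivity
  · filter_upwards [eventually_ge_atTop 1] with n hn
    set x := (n:ℝ) with hx
    have hx1 : (1:ℝ) ≤ x := by rw [hx]; exact_mod_cast hn
    have hx0 : (0:ℝ) < x := by linarith
    have hsx : (1:ℝ) ≤ Real.sqrt x := by
      rw [show (1:ℝ) = Real.sqrt 1 by simp]; exact Real.sqrt_le_sqrt hx1
    have hssx : (0:ℝ) < Real.sqrt (Real.sqrt x) := by
      apply Real.sqrt_pos.2; linarith
    have hlog : Real.log (1 + x) ≤ 4 * Real.sqrt x := by
      have e1 : Real.log (1 + x) = 2 * Real.log (Real.sqrt (1 + x)) := by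
        rw [Real.log_sqrt (by linarith)]; ring
      have e2 : Real.log (Real.sqrt (1 + x)) ≤ Real.sqrt (1 + x) - 1 :=
        Real.log_le_sub_one_of_pos (Real.sqrt_pos.2 (by linarith))
      have e3 : Real.sqrt (1 + x) ≤ Real.sqrt x + 1 := by
        rw [show Real.sqrt x + 1 = Real.sqrt ((Real.sqrt x + 1)^2) by
          rw [Real.sqrt_sq (by positivity)]]
        apply Real.sqrt_le_sqrt
        nlinarith [Real.sq_sqrt hx0.le, Real.sqrt_nonneg x]
      nlinarith
    have key : Real.sqrt (x * Real.log (1 + x)) * Real.sqrt (Real.sqrt x) ≤ 2 * x := by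
      have h1 : Real.sqrt (x * Real.log (1 + x)) * Real.sqrt (Real.sqrt x)
          = Real.sqrt (x * Real.log (1 + x) * Real.sqrt x) :=
        (Real.sqrt_mul (mul_nonneg hx0.le (Real.log_nonneg (by linarith))) _).symm
      have h2 : x * Real.log (1 + x) * Real.sqrt x ≤ (2 * x)^2 := by
        have hint := mul_le_mul_of_nonneg_left hlog
          (mul_nonneg hx0.le (Real.sqrt_nonneg x))
        nlinarith [Real.sq_sqrt hx0.le, Real.sqrt_nonneg x, hint]
      rw [h1, show (2:ℝ) * x = Real.sqrt ((2 * x)^2) by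
        rw [Real.sqrt_sq (by positivity)]]
      exact Real.sqrt_le_sqrt h2
    have : (1:ℝ) / x = x⁻¹ := one_div x
    rw [this, Real.sqrt_inv, Real.sqrt_inv]
    rw [show (2:ℝ) * (Real.sqrt (Real.sqrt x))⁻¹ = 2 / Real.sqrt (Real.sqrt x) by
      rw [inv_eq_one_div]; ring]
    rw [div_le_div_iff₀ hx0 hssx]
    linarith

theorem stmt6 (a : ℕ → ℝ)
    (hsub : ∀ m n : ℕ, 1 ≤ m → 1 ≤ n →
      a m + a n - 7 * Real.sqrt (((m:ℝ) + n) * Real.log (1 + ((m:ℝ) + n))) ≤ a (m + n))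
    (C : ℝ) (hC : ∀ n : ℕ, 1 ≤ n → a n / n ≤ C) :
    ∃ L : ℝ, Filter.Tendsto (fun n : ℕ => a n / n) Filter.atTop (nhds L) := by
  set b : ℕ → ℝ := fun n => a n / n with hb
  set sg : ℕ → ℝ := fun m => 200 * Real.sqrt ((m:ℝ) * Real.log (1 + m)) / m with hsg
  have hsg0 : ∀ m : ℕ, 0 ≤ sg m := fun m => div_nonneg (by positivity) (Nat.cast_nonneg m)
  have hsgt : Tendsto sg atTop (nhds 0) := by
    have := tend6.const_mul (200:ℝ)
    simpa [hsg, mul_div_assoc] using this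
  have hlemA := lemA a hsub
  -- lower bound for b
  have hlow : ∀ n : ℕ, 1 ≤ n →
      a 1 - 200 * Real.sqrt ((1:ℕ) * Real.log (1 + (1:ℕ))) ≤ b n := by
    intro n hn
    have h := hlemA 1 le_rfl n hn
    rw [mul_one] at h
    have hPhi := Phi6_le 1 le_rfl n
    have hn0 : (0:ℝ) < n := by exact_mod_cast hn
    have hint := mul_le_mul_of_nonneg_left hPhi hn0.le
    rw [hb]
    simp only
    rw [le_div_iff₀ hn0]
    nlinarith [h, hint]
  set Blo : ℝ := a 1 - 200 * Real.sqrt ((1:ℕ) * Real.log (1 + (1:ℕ))) with hBlo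
  have hub : ∀ᶠ n in atTop, b n ≤ C := by
    filter_upwards [eventually_ge_atTop 1] with n hn; exact hC n hn
  have hlb : ∀ᶠ n in atTop, Blo ≤ b n := by
    filter_upwards [eventually_ge_atTop 1] with n hn; exact hlow n hn
  have hBa : Filter.IsBoundedUnder (· ≤ ·) atTop b := ⟨C, eventually_map.mpr hub⟩
  have hBb : Filter.IsBoundedUnder (· ≥ ·) atTop b := ⟨Blo, eventually_map.mpr hlb⟩
  -- Lemma C
  have hlemC : ∀ m : ℕ, 1 ≤ m → b m - sg m ≤ Filter.liminf b atTop := by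
    intro m hm
    have hm0 : (0:ℝ) < m := by exact_mod_cast hm
    have hmne : (m:ℝ) ≠ 0 := ne_of_gt hm0
    have hbm : b m * m = a m := div_mul_cancel₀ _ hmne
    have hmsg : (m:ℝ) * sg m = 200 * Real.sqrt ((m:ℝ) * Real.log (1 + m)) := by
      rw [hsg]; field_simp
    set A : ℝ := ∑ r ∈ Finset.range m, |a r| with hA
    have hA0 : 0 ≤ A := Finset.sum_nonneg fun _ _ => abs_nonneg _
    set u : ℕ → ℝ := fun N => b m - sg m - (((m:ℝ) * |b m| + A) / N + psi6 N / N) with hu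
    have hut : Tendsto u atTop (nhds (b m - sg m)) := by
      have t1 : Tendsto (fun N : ℕ => ((m:ℝ) * |b m| + A) / N) atTop (nhds 0) :=
        tendsto_const_div_atTop_nhds_zero_nat _
      have t2 : Tendsto (fun N : ℕ => psi6 N / N) atTop (nhds 0) := by
        have := tend6.const_mul (7:ℝ)
        simpa [psi6, mul_div_assoc] using this
      have := (tendsto_const_nhds (x := b m - sg m)).sub (t1.add t2)
      simpa using this
    have hev : ∀ᶠ N in atTop, u N ≤ b N := by
      filter_upwards [eventually_ge_atTop m, eventually_ge_atTop 1] with N hNm hN1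
      have hN0 : (0:ℝ) < N := by exact_mod_cast hN1
      set q := N / m with hq
      set r := N % m with hr
      have hqr : m * q + r = N := Nat.div_add_mod N m
      have hq1 : 1 ≤ q := (Nat.one_le_div_iff (by omega)).2 hNm
      have hrm : r < m := Nat.mod_lt N (by omega)
      have hlAq := hlemA m hm q hq1
      have hPhiq : Phi6 m q ≤ (m:ℝ) * sg m := by rw [hmsg]; exact Phi6_le m hm q
      have hq0 : (0:ℝ) ≤ (q:ℝ) := Nat.cast_nonneg q
      have hint3 : (q:ℝ) * Phi6 m q ≤ (q:ℝ) * ((m:ℝ) * sg m) :=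
        mul_le_mul_of_nonneg_left hPhiq hq0
      have hUN : u N * N = (b m - sg m) * N - ((m:ℝ) * |b m| + A) - psi6 N := by
        rw [hu]; field_simp; ring
      have hgoal : u N * N ≤ a N → u N ≤ b N := by
        intro h
        rw [hb]; simp only
        rw [le_div_iff₀ hN0]; exact h
      apply hgoal
      rw [hUN]
      rcases Nat.eq_zero_or_pos r with hr0 | hr1
      · have hNqm : q * m = N := by rw [mul_comm]; omega
        have hqmr : (q:ℝ) * m = N := by exact_mod_cast congrArg (Nat.cast : ℕ → ℝ) hNqm
        have hlAq' : (q:ℝ) * a m - (q:ℝ) * Phi6 m q ≤ a N := by rw [← hNqm]; exact hlAq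
        have e1 : b m * (N:ℝ) = (q:ℝ) * a m := by
          rw [← hqmr, show b m * ((q:ℝ) * m) = (q:ℝ) * (b m * m) by ring, hbm]
        have e2 : sg m * (N:ℝ) = (q:ℝ) * ((m:ℝ) * sg m) := by rw [← hqmr]; ring
        have habs : 0 ≤ (m:ℝ) * |b m| := mul_nonneg hm0.le (abs_nonneg _)
        linarith [hlAq', hint3, e1, e2, hA0, psi6_nonneg ((N:ℝ)), habs]
      · have hqm1 : 1 ≤ q * m :=
          Nat.one_le_iff_ne_zero.2 (Nat.mul_ne_zero (by omega) (by omega))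
        have hS := hsub (q * m) r hqm1 hr1
        have hNqm : q * m + r = N := by rw [mul_comm]; omega
        have hcast : ((q * m : ℕ):ℝ) + (r:ℝ) = (N:ℝ) := by
          rw [← hNqm]; push_cast; ring
        rw [hcast, hNqm] at hS
        have har : -A ≤ a r := by
          have : |a r| ≤ A := Finset.single_le_sum (f := fun i => |a i|)
            (fun i _ => abs_nonneg _) (Finset.mem_range.2 hrm)
          linarith [neg_abs_le (a r)]
        have hqmr : (q:ℝ) * m + r = N := by
          rw [← hNqm]; push_cast; ring
        have e1 : b m * (N:ℝ) = (q:ℝ) * a m + (r:ℝ) * b m := by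
          rw [← hqmr, show b m * ((q:ℝ) * m + r) = (q:ℝ) * (b m * m) + (r:ℝ) * b m by ring,
            hbm]
        have e2 : sg m * (N:ℝ) = (q:ℝ) * ((m:ℝ) * sg m) + (r:ℝ) * sg m := by
          rw [← hqmr]; ring
        have hr0' : (0:ℝ) ≤ (r:ℝ) := Nat.cast_nonneg r
        have hrmR : (r:ℝ) ≤ (m:ℝ) := by exact_mod_cast hrm.le
        have hint1 : (r:ℝ) * b m ≤ (m:ℝ) * |b m| :=
          le_trans (mul_le_mul_of_nonneg_left (le_abs_self _) hr0')
            (mul_le_mul_of_nonneg_right hrmR (abs_nonneg _))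
        have hint2 : 0 ≤ (r:ℝ) * sg m := mul_nonneg hr0' (hsg0 m)
        have hpsiS : a (q * m) + a r - psi6 (N:ℝ) ≤ a N := hS
        linarith [hlAq, hint3, e1, e2, hint1, hint2, har, hpsiS]
    have h1 : Filter.liminf u atTop ≤ Filter.liminf b atTop :=
      Filter.liminf_le_liminf hev hut.isBoundedUnder_ge hBa.isCoboundedUnder_ge
    rwa [hut.liminf_eq] at h1
  -- conclude
  have hls : Filter.limsup b atTop ≤ Filter.liminf b atTop := by
    have hev : ∀ᶠ m in atTop, b m ≤ Filter.liminf b atTop + sg m := by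
      filter_upwards [eventually_ge_atTop 1] with m hm
      linarith [hlemC m hm]
    have ht : Tendsto (fun m : ℕ => Filter.liminf b atTop + sg m) atTop
        (nhds (Filter.liminf b atTop)) := by
      simpa using (tendsto_const_nhds (x := Filter.liminf b atTop)).add hsgt
    calc Filter.limsup b atTop
        ≤ Filter.limsup (fun m : ℕ => Filter.liminf b atTop + sg m) atTop :=
          Filter.limsup_le_limsup hev hBb.isCoboundedUnder_le ht.isBoundedUnder_le
      _ = Filter.liminf b atTop := ht.limsup_eq
  have heq : Filter.liminf b atTop = Filter.limsup b atTop :=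
    le_antisymm (Filter.liminf_le_limsup hBa hBb) hls
  exact ⟨Filter.limsup b atTop, tendsto_of_liminf_eq_limsup heq rfl hBa hBb⟩
end

section
/- The function ψ(x) = 7·√(x·log(1+x)) is concave on [0, ∞). -/
lemma key_ineq {a b A B C D : ℝ} (ha : 0 ≤ a) (hb : 0 ≤ b) (hA : 0 ≤ A) (hB : 0 ≤ B)
    (hC : 0 ≤ C) (hD : 0 ≤ D) :
    a * Real.sqrt (A * C) + b * Real.sqrt (B * D) ≤
      Real.sqrt ((a * A + b * B) * (a * C + b * D)) := by
  rw [show a * Real.sqrt (A * C) + b * Real.sqrt (B * D) =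
      Real.sqrt ((a * Real.sqrt (A * C) + b * Real.sqrt (B * D)) ^ 2) by
    rw [Real.sqrt_sq (by positivity)]]
  apply Real.sqrt_le_sqrt
  have e1 : Real.sqrt (A * C) ^ 2 = A * C := Real.sq_sqrt (by positivity)
  have e2 : Real.sqrt (B * D) ^ 2 = B * D := Real.sq_sqrt (by positivity)
  have h2 : Real.sqrt (A * C) * Real.sqrt (B * D) = Real.sqrt (A * D) * Real.sqrt (B * C) := by
    rw [← Real.sqrt_mul (by positivity), ← Real.sqrt_mul (by positivity)]
    ring_nf
  have h3 : 2 * (Real.sqrt (A * D) * Real.sqrt (B * C)) ≤ A * D + B * C := by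
    have h := two_mul_le_add_sq (Real.sqrt (A * D)) (Real.sqrt (B * C))
    rw [Real.sq_sqrt (by positivity), Real.sq_sqrt (by positivity)] at h
    linarith [h, mul_assoc 2 (Real.sqrt (A*D)) (Real.sqrt (B*C))]
  have h4 : (a * Real.sqrt (A * C) + b * Real.sqrt (B * D)) ^ 2
      = a^2*(A*C) + b^2*(B*D) + 2*a*b*(Real.sqrt (A*D) * Real.sqrt (B*C)) := by
    rw [add_sq, mul_pow, mul_pow, e1, e2]
    linear_combination (2*a*b) * h2
  rw [h4]
  nlinarith [mul_le_mul_of_nonneg_left h3 (mul_nonneg ha hb)]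

lemma sqrt_mul_concave {s : Set ℝ} {f g : ℝ → ℝ}
    (hf : ConcaveOn ℝ s f) (hg : ConcaveOn ℝ s g)
    (hf0 : ∀ x ∈ s, 0 ≤ f x) (hg0 : ∀ x ∈ s, 0 ≤ g x) :
    ConcaveOn ℝ s (fun x => Real.sqrt (f x * g x)) := by
  refine ⟨hf.1, ?_⟩
  intro x hx y hy a b ha hb hab
  have hz : a • x + b • y ∈ s := hf.1 hx hy ha hb hab
  have hcf := hf.2 hx hy ha hb hab
  have hcg := hg.2 hx hy ha hb hab
  calc a • Real.sqrt (f x * g x) + b • Real.sqrt (f y * g y)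
      ≤ Real.sqrt ((a * f x + b * f y) * (a * g x + b * g y)) := by
        simpa using key_ineq ha hb (hf0 x hx) (hf0 y hy) (hg0 x hx) (hg0 y hy)
    _ ≤ Real.sqrt (f (a • x + b • y) * g (a • x + b • y)) := by
        apply Real.sqrt_le_sqrt
        have g1 := hg0 x hx; have g2 := hg0 y hy
        apply mul_le_mul (by simpa using hcf) (by simpa using hcg)
          (by positivity) (hf0 _ hz)

theorem stmt7 :
    ConcaveOn ℝ (Set.Ici (0:ℝ)) (fun x => 7 * Real.sqrt (x * Real.log (1 + x))) := by
  have hf : ConcaveOn ℝ (Set.Ici (0:ℝ)) (fun x : ℝ => x) :=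
    (concaveOn_id (convex_Ici 0))
  have hg : ConcaveOn ℝ (Set.Ici (0:ℝ)) (fun x : ℝ => Real.log (1 + x)) := by
    have hlog := strictConcaveOn_log_Ioi.concaveOn
    refine ⟨convex_Ici 0, ?_⟩
    intro x hx y hy a b ha hb hab
    have h1x : (1 : ℝ) + x ∈ Set.Ioi (0:ℝ) := by simp [Set.mem_Ici] at hx ⊢; linarith
    have h1y : (1 : ℝ) + y ∈ Set.Ioi (0:ℝ) := by simp [Set.mem_Ici] at hy ⊢; linarith
    have := hlog.2 h1x h1y ha hb hab
    have heq : a • (1 + x) + b • (1 + y) = 1 + (a • x + b • y) := by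
      simp [smul_eq_mul]; nlinarith
    rwa [heq] at this
  have hf0 : ∀ x ∈ Set.Ici (0:ℝ), 0 ≤ (fun x : ℝ => x) x := fun x hx => hx
  have hg0 : ∀ x ∈ Set.Ici (0:ℝ), 0 ≤ (fun x : ℝ => Real.log (1 + x)) x := by
    intro x hx
    exact Real.log_nonneg (by simp [Set.mem_Ici] at hx; linarith)
  have h := (sqrt_mul_concave hf hg hf0 hg0).smul (by norm_num : (0:ℝ) ≤ 7)
  simpa [smul_eq_mul] using h
end
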